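/- arXiv:1706.09041 — 5 statements merged into one kernel-verified Lean document; each statement's English description precedes it below -/
import Mathlib

section
/- Let N be a finite set and for each subset Y ⊆ N let g(Y) be a nonnegative integer such that g(X) = Σ_{X ⊆ Y ⊆ N} f(Y) for a function f. Then the sum of f(X) over all odd-cardinality subsets X ⊆ N equals Σ_{∅ ≠ Y ⊆ N} (-2)^{|Y|-1} g(Y). -/
open Finset

lemma key_coeff {α : Type*} [DecidableEq α] (Z : Finset α) :
    ∑ Y ∈ Z.powerset.filter (fun Y => Y ≠ ∅), (-2 : ℝ) ^ (Y.card - 1)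
      = if Odd Z.card then 1 else 0 := by
  have hpow : ∑ Y ∈ Z.powerset, (-2 : ℝ) ^ Y.card = (-1 : ℝ) ^ Z.card := by
    have := Finset.sum_pow_mul_eq_add_pow (-2 : ℝ) 1 Z
    norm_num at this
    simpa using this
  have hsplit : (-2 : ℝ) ^ (∅ : Finset α).card
      + ∑ Y ∈ Z.powerset.filter (fun Y => Y ≠ ∅), (-2 : ℝ) ^ Y.card
      = ∑ Y ∈ Z.powerset, (-2 : ℝ) ^ Y.card := by
    rw [Finset.filter_ne']
    exact Finset.add_sum_erase Z.powerset (fun Y => (-2 : ℝ) ^ Y.card) (Finset.empty_mem_powerset Z)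
  have hmul : (-2 : ℝ) * ∑ Y ∈ Z.powerset.filter (fun Y => Y ≠ ∅), (-2 : ℝ) ^ (Y.card - 1)
      = ∑ Y ∈ Z.powerset.filter (fun Y => Y ≠ ∅), (-2 : ℝ) ^ Y.card := by
    rw [Finset.mul_sum]
    refine Finset.sum_congr rfl fun Y hY => ?_
    have hne : Y ≠ ∅ := (Finset.mem_filter.1 hY).2
    have hc : 1 ≤ Y.card := Finset.card_pos.2 (Finset.nonempty_iff_ne_empty.2 hne)
    rw [← pow_succ']
    congr 1
    omega
  have : (-2 : ℝ) * ∑ Y ∈ Z.powerset.filter (fun Y => Y ≠ ∅), (-2 : ℝ) ^ (Y.card - 1)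
      = (-1 : ℝ) ^ Z.card - 1 := by
    simp only [Finset.card_empty, pow_zero] at hsplit
    rw [hmul]; linarith [hsplit, hpow]
  rcases Nat.even_or_odd Z.card with he | ho
  · rw [if_neg (by simpa using he)]
    rw [he.neg_one_pow] at this
    linarith
  · rw [if_pos ho]
    rw [ho.neg_one_pow] at this
    linarith

/-- Möbius-inversion identity: if `g X = Σ_{X ⊆ Y ⊆ N} f Y`, then the sum of
`f X` over odd-cardinality subsets `X ⊆ N` equals `Σ_{∅ ≠ Y ⊆ N} (-2)^{|Y|-1} g Y`. -/
theorem stmt0 {α : Type*} [DecidableEq α] (N : Finset α) (f g : Finset α → ℝ)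
    (h : ∀ X ⊆ N, g X = ∑ Y ∈ N.powerset.filter (fun Y => X ⊆ Y), f Y) :
    ∑ X ∈ N.powerset.filter (fun X => Odd X.card), f X
      = ∑ Y ∈ N.powerset.filter (fun Y => Y ≠ ∅), (-2 : ℝ) ^ (Y.card - 1) * g Y := by
  have step1 : ∑ Y ∈ N.powerset.filter (fun Y => Y ≠ ∅), (-2 : ℝ) ^ (Y.card - 1) * g Y
      = ∑ Y ∈ N.powerset, ∑ Z ∈ N.powerset,
          (if Y ≠ ∅ ∧ Y ⊆ Z then (-2 : ℝ) ^ (Y.card - 1) * f Z else 0) := by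
    rw [Finset.sum_filter]
    refine Finset.sum_congr rfl fun Y hY => ?_
    by_cases hne : Y ≠ ∅
    · rw [if_pos hne, h Y (Finset.mem_powerset.1 hY), Finset.mul_sum, Finset.sum_filter]
      refine Finset.sum_congr rfl fun Z _ => ?_
      by_cases hsub : Y ⊆ Z
      · rw [if_pos hsub, if_pos ⟨hne, hsub⟩]
      · rw [if_neg hsub, if_neg (fun hc => hsub hc.2)]
    · rw [if_neg hne]
      exact (Finset.sum_eq_zero fun Z _ => by rw [if_neg (fun hc => hne hc.1)]).symm
  rw [step1, Finset.sum_comm]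
  rw [Finset.sum_filter]
  refine Finset.sum_congr rfl fun Z hZ => ?_
  have hZN : Z ⊆ N := Finset.mem_powerset.1 hZ
  have hfilter : N.powerset.filter (fun Y => Y ≠ ∅ ∧ Y ⊆ Z)
      = Z.powerset.filter (fun Y => Y ≠ ∅) := by
    ext Y
    simp only [Finset.mem_filter, Finset.mem_powerset]
    constructor
    · rintro ⟨_, hne, hsub⟩; exact ⟨hsub, hne⟩
    · rintro ⟨hsub, hne⟩; exact ⟨hsub.trans hZN, hne, hsub⟩
  symm
  calc ∑ Y ∈ N.powerset, (if Y ≠ ∅ ∧ Y ⊆ Z then (-2 : ℝ) ^ (Y.card - 1) * f Z else 0)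
      = (∑ Y ∈ Z.powerset.filter (fun Y => Y ≠ ∅), (-2 : ℝ) ^ (Y.card - 1)) * f Z := by
        rw [← Finset.sum_filter, hfilter, Finset.sum_mul]
    _ = if Odd Z.card then f Z else 0 := by
        rw [key_coeff]
        by_cases ho : Odd Z.card <;> simp [ho]
end

section
/- For the complete graph K_n with n ≥ 3, the set of negative cycle vectors of all signings of K_n spans a real vector space of dimension n - 2. -/
open Finset

/-- The set of edge sets of cycles of length `l` in `G`, as unoriented cycle subgraphs. -/
def cycleSets {V : Type*} [DecidableEq V] (G : SimpleGraph V) (l : ℕ) : Set (Finset (Sym2 V)) :=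
  {C | ∃ (v : V) (w : G.Walk v v), w.IsCycle ∧ w.length = l ∧ w.edges.toFinset = C}

/-- The number of cycles of length `l` in `G`. -/
noncomputable def cycleCount {V : Type*} [DecidableEq V] (G : SimpleGraph V) (l : ℕ) : ℕ :=
  (cycleSets G l).ncard

/-- The number of negative `l`-cycles of `G` signed with negative edge set `N`:
cycles meeting `N` in an odd number of edges. -/
noncomputable def negCycleCount {V : Type*} [DecidableEq V] (G : SimpleGraph V)
    (N : Finset (Sym2 V)) (l : ℕ) : ℕ :=
  {C | C ∈ cycleSets G l ∧ Odd (C ∩ N).card}.ncard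

/-- The number of negative `l`-cycles of `G` with edge sign function `σ`. -/
noncomputable def negCycleCountS {V : Type*} [DecidableEq V] (G : SimpleGraph V)
    (σ : Sym2 V → ℤ) (l : ℕ) : ℕ :=
  {C | C ∈ cycleSets G l ∧ ∏ e ∈ C, σ e = -1}.ncard

/-- A set of edges is a matching: its members are pairwise vertex-disjoint. -/
def IsMatchingSet {V : Type*} (S : Finset (Sym2 V)) : Prop :=
  ∀ e ∈ S, ∀ f ∈ S, e ≠ f → ∀ v : V, v ∈ e → v ∉ f

/-- The sign multiplier on edges produced by switching at the vertex set `X`. -/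
def switchSign {V : Type*} [DecidableEq V] (X : Finset V) : Sym2 V → ℤ :=
  Sym2.lift ⟨fun a b => (if a ∈ X then (-1 : ℤ) else 1) * (if b ∈ X then (-1 : ℤ) else 1),
    fun _ _ => mul_comm _ _⟩

/-- The set of (potential) edges with exactly one endpoint in `X`. -/
def crossEdges {V : Type*} [Fintype V] [DecidableEq V] (X : Finset V) : Finset (Sym2 V) :=
  (X ×ˢ Xᶜ).image fun p => s(p.1, p.2)

section Aux

open SimpleGraph Matrix
open Fin.NatCast

lemma pathAux (n : ℕ) [NeZero n] : ∀ k : ℕ, k < n →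
    ∃ p : (⊤ : SimpleGraph (Fin n)).Walk (k : Fin n) (0 : Fin n),
      p.length = k ∧
      p.support = List.map (fun i : ℕ => (i : Fin n)) (List.range (k+1)).reverse ∧
      p.edges = List.map (fun i : ℕ => s(((i+1 : ℕ) : Fin n), ((i : ℕ) : Fin n)))
        (List.range k).reverse := by
  intro k
  induction k with
  | zero =>
    intro _
    refine ⟨(SimpleGraph.Walk.nil).copy (by simp) rfl, by simp, by simp [List.range_succ], by simp⟩
  | succ k ih =>
    intro hk
    obtain ⟨p, hlen, hsupp, hedges⟩ := ih (by omega)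
    have hadj : (⊤ : SimpleGraph (Fin n)).Adj ((k+1 : ℕ) : Fin n) ((k : ℕ) : Fin n) := by
      simp only [top_adj, ne_eq]
      intro h
      have := congrArg Fin.val h
      rw [Fin.val_cast_of_lt hk, Fin.val_cast_of_lt (by omega)] at this
      omega
    refine ⟨SimpleGraph.Walk.cons hadj p, by simp [hlen], ?_, ?_⟩
    · rw [SimpleGraph.Walk.support_cons, hsupp]
      simp [List.range_succ]
    · rw [SimpleGraph.Walk.edges_cons, hedges]
      simp [List.range_succ]

lemma cycleSets_nonempty (n l : ℕ) (h3 : 3 ≤ l) (hl : l ≤ n) :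
    (cycleSets (⊤ : SimpleGraph (Fin n)) l).Nonempty := by
  haveI : NeZero n := ⟨by omega⟩
  obtain ⟨p, hlen, hsupp, hedges⟩ := pathAux n (l-1) (by omega)
  have hinj : ∀ a < n, ∀ b < n, (a : Fin n) = (b : Fin n) → a = b := by
    intro a ha b hb h
    have := congrArg Fin.val h
    rwa [Fin.val_cast_of_lt ha, Fin.val_cast_of_lt hb] at this
  have hadj : (⊤ : SimpleGraph (Fin n)).Adj (0 : Fin n) (((l-1 : ℕ) : Fin n)) := by
    simp only [top_adj, ne_eq]
    intro h
    have := hinj 0 (by omega) (l-1) (by omega) (by simpa using h)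
    omega
  refine ⟨(SimpleGraph.Walk.cons hadj p).edges.toFinset, 0, _, ?_, ?_, rfl⟩
  · rw [SimpleGraph.Walk.cons_isCycle_iff]
    constructor
    · rw [SimpleGraph.Walk.isPath_def, hsupp]
      refine List.Nodup.map_on ?_ (by simp [List.nodup_range])
      intro a ha b hb hab
      simp only [List.mem_reverse, List.mem_range] at ha hb
      exact hinj a (by omega) b (by omega) hab
    · rw [hedges]
      simp only [List.mem_map, List.mem_reverse, List.mem_range]
      rintro ⟨i, hi, he⟩
      rw [Sym2.eq_iff] at he
      rcases he with ⟨h1, h2⟩ | ⟨h1, h2⟩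
      · have := hinj (i+1) (by omega) 0 (by omega) (by simpa using h1)
        omega
      · have := hinj (i+1) (by omega) (l-1) (by omega) h1
        have := hinj i (by omega) 0 (by omega) (by simpa using h2)
        omega
  · rw [SimpleGraph.Walk.length_cons, hlen]
    omega

lemma card_of_mem_cycleSets {V : Type*} [DecidableEq V] {G : SimpleGraph V} {l : ℕ}
    {C : Finset (Sym2 V)} (h : C ∈ cycleSets G l) : C.card = l := by
  obtain ⟨v, w, hc, hlen, hC⟩ := h
  rw [← hC, List.toFinset_card_of_nodup hc.edges_nodup, SimpleGraph.Walk.length_edges, hlen]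

lemma negCycleCount_eq {V : Type*} [Fintype V] [DecidableEq V] (G : SimpleGraph V)
    (N : Finset (Sym2 V)) (l : ℕ) :
    negCycleCount G N l
      = (((cycleSets G l).toFinite.toFinset).filter (fun C => Odd ((C ∩ N).card))).card := by
  rw [negCycleCount, show {C | C ∈ cycleSets G l ∧ Odd (C ∩ N).card}
      = ↑(((cycleSets G l).toFinite.toFinset).filter (fun C => Odd ((C ∩ N).card))) by
    ext C; simp [Set.Finite.mem_toFinset], Set.ncard_coe_finset]

lemma key_step1 {ι : Type*} [Fintype ι] [DecidableEq ι] (C : Finset ι) (a : ℝ) :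
    ∑ N ∈ (univ : Finset ι).powerset,
      ((-1 : ℝ)) ^ ((C ∩ N).card) * (a ^ N.card * (1-a) ^ ((univ : Finset ι) \ N).card)
      = (1-2*a) ^ C.card := by
  have h := Finset.prod_add (fun e : ι => if e ∈ C then (-a : ℝ) else a)
    (fun _ : ι => (1-a : ℝ)) univ
  have hl : ∏ e : ι, ((if e ∈ C then (-a : ℝ) else a) + (1-a)) = (1-2*a) ^ C.card := by
    have : ∀ e : ι, ((if e ∈ C then (-a : ℝ) else a) + (1-a)) =
        (if e ∈ C then (1-2*a : ℝ) else 1) := by intro e; split <;> ring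
    rw [Finset.prod_congr rfl (fun e _ => this e), Finset.prod_ite, Finset.prod_const,
      Finset.prod_const_one, mul_one, Finset.filter_univ_mem]
  have hr : ∀ N ∈ (univ : Finset ι).powerset,
      (∏ e ∈ N, (if e ∈ C then (-a : ℝ) else a)) * ∏ _e ∈ (univ : Finset ι) \ N, (1-a : ℝ)
      = ((-1 : ℝ)) ^ ((C ∩ N).card) * (a ^ N.card * (1-a) ^ ((univ : Finset ι) \ N).card) := by
    intro N _
    rw [Finset.prod_ite, Finset.prod_const, Finset.prod_const, Finset.prod_const,
      Finset.filter_mem_eq_inter, Finset.inter_comm N C]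
    have hb : (C ∩ N).card + (N \ C).card = N.card := by
      rw [Finset.inter_comm]
      exact Finset.card_inter_add_card_sdiff N C
    have : (N.filter (fun e => ¬ e ∈ C)) = N \ C := by
      ext x; simp [Finset.mem_sdiff, and_comm]
    rw [this]
    rw [neg_pow]
    rw [show a ^ N.card = a ^ (C ∩ N).card * a ^ (N \ C).card by
      rw [← pow_add, hb]]
    ring
  rw [Finset.sum_congr rfl hr] at h
  rw [← h, hl]

lemma key_step3 {ι : Type*} [DecidableEq ι] (S : Finset (Finset ι)) (N : Finset ι) :
    ∑ C ∈ S, ((-1 : ℝ)) ^ ((C ∩ N).card)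
      = (S.card : ℝ) - 2 * ((S.filter (fun C => Odd ((C ∩ N).card))).card : ℝ) := by
  have : ∀ C ∈ S, ((-1 : ℝ)) ^ ((C ∩ N).card)
      = 1 - 2 * (if Odd ((C ∩ N).card) then (1:ℝ) else 0) := by
    intro C _
    rcases Nat.even_or_odd ((C ∩ N).card) with h | h
    · rw [h.neg_one_pow, if_neg (by simpa [Nat.not_odd_iff_even] using h)]; ring
    · rw [h.neg_one_pow, if_pos h]; ring
  rw [Finset.sum_congr rfl this, Finset.sum_sub_distrib, Finset.sum_const, ← Finset.mul_sum,
    Finset.sum_boole]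
  simp

lemma key_sum_one {ι : Type*} [Fintype ι] [DecidableEq ι] (a : ℝ) :
    ∑ N ∈ (univ : Finset ι).powerset, (a ^ N.card * (1-a) ^ ((univ : Finset ι) \ N).card)
      = 1 := by
  have h := Finset.prod_add (fun _ : ι => (a : ℝ)) (fun _ : ι => (1-a : ℝ)) univ
  simpa using h.symm

lemma key_identity {ι : Type*} [Fintype ι] [DecidableEq ι] (S : Finset (Finset ι)) (l : ℕ)
    (hcard : ∀ C ∈ S, C.card = l) (a : ℝ) :
    ∑ N ∈ (univ : Finset ι).powerset, (a ^ N.card * (1-a) ^ ((univ : Finset ι) \ N).card) *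
      ((S.card : ℝ) - 2 * ((S.filter (fun C => Odd ((C ∩ N).card))).card : ℝ))
      = (S.card : ℝ) * (1-2*a) ^ l := by
  have : ∀ N ∈ (univ : Finset ι).powerset,
      (a ^ N.card * (1-a) ^ ((univ : Finset ι) \ N).card) *
        ((S.card : ℝ) - 2 * ((S.filter (fun C => Odd ((C ∩ N).card))).card : ℝ))
      = ∑ C ∈ S, ((-1 : ℝ)) ^ ((C ∩ N).card) *
          (a ^ N.card * (1-a) ^ ((univ : Finset ι) \ N).card) := by
    intro N _
    rw [← Finset.sum_mul, key_step3, mul_comm]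
  rw [Finset.sum_congr rfl this, Finset.sum_comm]
  have : ∀ C ∈ S, ∑ N ∈ (univ : Finset ι).powerset, ((-1 : ℝ)) ^ ((C ∩ N).card) *
      (a ^ N.card * (1-a) ^ ((univ : Finset ι) \ N).card) = (1-2*a) ^ l := by
    intro C hC
    rw [key_step1, hcard C hC]
  rw [Finset.sum_congr rfl this, Finset.sum_const, nsmul_eq_mul]

lemma keyFiltered {ι : Type*} [Fintype ι] [DecidableEq ι] (S : Finset (Finset ι)) (l : ℕ)
    (hcard : ∀ C ∈ S, C.card = l) (x : ℝ) :
    ∑ N ∈ (univ : Finset ι).powerset,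
      (((1-x)/2) ^ N.card * (1-(1-x)/2) ^ ((univ : Finset ι) \ N).card) *
      ((S.filter (fun C => Odd ((C ∩ N).card))).card : ℝ)
      = (S.card : ℝ) * (1 - x ^ l) / 2 := by
  set a : ℝ := (1-x)/2 with ha
  have hx : 1 - 2*a = x := by rw [ha]; ring
  have h1 := key_identity S l hcard a
  have h2 := key_sum_one (ι := ι) a
  have expand : ∀ N ∈ (univ : Finset ι).powerset,
      (a ^ N.card * (1-a) ^ ((univ : Finset ι) \ N).card) *
        ((S.card : ℝ) - 2 * ((S.filter (fun C => Odd ((C ∩ N).card))).card : ℝ))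
      = (S.card : ℝ) * (a ^ N.card * (1-a) ^ ((univ : Finset ι) \ N).card)
        - 2 * ((a ^ N.card * (1-a) ^ ((univ : Finset ι) \ N).card) *
            ((S.filter (fun C => Odd ((C ∩ N).card))).card : ℝ)) := by
    intro N _; ring
  rw [Finset.sum_congr rfl expand, Finset.sum_sub_distrib, ← Finset.mul_sum, ← Finset.mul_sum,
    h2, mul_one, hx] at h1
  linarith

lemma vandCols (m : ℕ) (c : Fin m → ℝ) (hc : ∀ i, c i ≠ 0) :
    LinearIndependent ℝ (fun j : Fin m => fun i : Fin m =>
      c i * ((j : ℝ) + 1) ^ ((i : ℕ) + 3) / 2) := by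
  set M : Matrix (Fin m) (Fin m) ℝ :=
    Matrix.of fun i j : Fin m => c i * ((j : ℝ) + 1) ^ ((i : ℕ) + 3) / 2 with hM
  have hMeq : M = Matrix.diagonal (fun i => c i / 2) *
      (Matrix.vandermonde (fun j : Fin m => (j : ℝ) + 1))ᵀ *
      Matrix.diagonal (fun j : Fin m => ((j : ℝ) + 1) ^ 3) := by
    ext i j
    rw [Matrix.mul_diagonal, Matrix.diagonal_mul]
    simp only [hM, Matrix.of_apply, Matrix.transpose_apply, Matrix.vandermonde_apply]
    rw [pow_add]
    ring
  have hinj : Function.Injective (fun j : Fin m => (j : ℝ) + 1) := by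
    intro a b h
    simp only [add_left_inj, Nat.cast_inj] at h
    exact Fin.val_injective (by exact_mod_cast h)
  have hdet : M.det ≠ 0 := by
    rw [hMeq, Matrix.det_mul, Matrix.det_mul, Matrix.det_transpose, Matrix.det_diagonal,
      Matrix.det_diagonal]
    refine mul_ne_zero (mul_ne_zero (Finset.prod_ne_zero_iff.2 fun i _ => by
      exact div_ne_zero (hc i) two_ne_zero) ?_) (Finset.prod_ne_zero_iff.2 fun j _ => ?_)
    · rw [Matrix.det_vandermonde_ne_zero_iff]
      exact hinj
    · positivity
  have hU : IsUnit M := (Matrix.isUnit_iff_isUnit_det M).2 (isUnit_iff_ne_zero.2 hdet)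
  exact Matrix.linearIndependent_cols_iff_isUnit.2 hU

end Aux

/-- The negative cycle vectors of all signings of `K_n` (`n ≥ 3`) span a
space of dimension `n - 2`. -/
theorem stmt10 (n : ℕ) (hn : 3 ≤ n) :
    Module.finrank ℝ (Submodule.span ℝ
      (Set.range fun N : Finset (Sym2 (Fin n)) =>
        fun i : Fin (n - 2) =>
          (negCycleCount (⊤ : SimpleGraph (Fin n)) N ((i : ℕ) + 3) : ℝ)))
      = n - 2 := by
  classical
  set m := n - 2 with hm
  set g : Finset (Sym2 (Fin n)) → (Fin m → ℝ) := fun N =>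
    fun i : Fin m => (negCycleCount (⊤ : SimpleGraph (Fin n)) N ((i : ℕ) + 3) : ℝ) with hg
  set sp := Submodule.span ℝ (Set.range g) with hsp
  set Sfin : ℕ → Finset (Finset (Sym2 (Fin n))) :=
    fun l => (cycleSets (⊤ : SimpleGraph (Fin n)) l).toFinite.toFinset with hSfin
  have hcard : ∀ l, ∀ C ∈ Sfin l, C.card = l := by
    intro l C hC
    exact card_of_mem_cycleSets ((Set.Finite.mem_toFinset _).1 hC)
  -- Step A: vectors (c_l (1 - x^l)/2) are in the span
  have stepA : ∀ x : ℝ, (fun i : Fin m =>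
      ((Sfin ((i : ℕ) + 3)).card : ℝ) * (1 - x ^ ((i : ℕ) + 3)) / 2) ∈ sp := by
    intro x
    set a : ℝ := (1-x)/2 with ha
    have : (fun i : Fin m =>
        ((Sfin ((i : ℕ) + 3)).card : ℝ) * (1 - x ^ ((i : ℕ) + 3)) / 2)
        = ∑ N ∈ (univ : Finset (Sym2 (Fin n))).powerset,
          (a ^ N.card * (1-a) ^ ((univ : Finset (Sym2 (Fin n))) \ N).card) • g N := by
      funext i
      rw [Finset.sum_apply]
      have := keyFiltered (Sfin ((i : ℕ) + 3)) ((i : ℕ) + 3) (hcard _) x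
      rw [← this]
      refine Finset.sum_congr rfl fun N _ => ?_
      rw [Pi.smul_apply, smul_eq_mul, hg]
      simp only []
      rw [negCycleCount_eq]
    rw [this]
    exact Submodule.sum_mem _ fun N _ =>
      Submodule.smul_mem _ _ (Submodule.subset_span (Set.mem_range_self N))
  -- Step B: Vandermonde-type columns are in the span
  have stepB : ∀ j : Fin m, (fun i : Fin m =>
      ((Sfin ((i : ℕ) + 3)).card : ℝ) * ((j : ℝ) + 1) ^ ((i : ℕ) + 3) / 2) ∈ sp := by
    intro j
    have h0 := stepA 0
    have hj := stepA ((j : ℝ) + 1)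
    have := Submodule.sub_mem sp h0 hj
    convert this using 1
    funext i
    simp only [Pi.sub_apply]
    rw [zero_pow (by omega)]
    ring
  -- Step C: linear independence
  have hne : ∀ i : Fin m, (((Sfin ((i : ℕ) + 3)).card : ℝ)) ≠ 0 := by
    intro i
    have h3 : 3 ≤ (i : ℕ) + 3 := by omega
    have hln : (i : ℕ) + 3 ≤ n := by have := i.isLt; omega
    obtain ⟨C, hC⟩ := cycleSets_nonempty n ((i : ℕ) + 3) h3 hln
    have : C ∈ Sfin ((i : ℕ) + 3) := (Set.Finite.mem_toFinset _).2 hC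
    have hpos : 0 < (Sfin ((i : ℕ) + 3)).card := Finset.card_pos.2 ⟨C, this⟩
    exact_mod_cast hpos.ne'
  have hLI := vandCols m (fun i => ((Sfin ((i : ℕ) + 3)).card : ℝ)) hne
  -- Step D: conclude
  have hle1 : Submodule.span ℝ (Set.range (fun j : Fin m => fun i : Fin m =>
      ((Sfin ((i : ℕ) + 3)).card : ℝ) * ((j : ℝ) + 1) ^ ((i : ℕ) + 3) / 2)) ≤ sp :=
    Submodule.span_le.2 (by rintro _ ⟨j, rfl⟩; exact stepB j)
  have h1 : Module.finrank ℝ (Submodule.span ℝ (Set.range (fun j : Fin m => fun i : Fin m =>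
      ((Sfin ((i : ℕ) + 3)).card : ℝ) * ((j : ℝ) + 1) ^ ((i : ℕ) + 3) / 2))) = m := by
    rw [finrank_span_eq_card hLI, Fintype.card_fin]
  refine le_antisymm ?_ ?_
  · calc Module.finrank ℝ sp ≤ Module.finrank ℝ (Fin m → ℝ) := Submodule.finrank_le sp
    _ = m := by rw [Module.finrank_pi, Fintype.card_fin]
  · calc (m : ℕ) = Module.finrank ℝ (Submodule.span ℝ (Set.range (fun j : Fin m =>
        fun i : Fin m => ((Sfin ((i : ℕ) + 3)).card : ℝ) * ((j : ℝ) + 1) ^ ((i : ℕ) + 3) / 2)))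
        := h1.symm
    _ ≤ Module.finrank ℝ sp := Submodule.finrank_mono hle1
end

section
/- The negative cycle vectors of all signings of K_4 are exactly (0,0), (2,2), and (4,0), where the coordinates count negative triangles and negative 4-cycles respectively. -/
open Finset

def F3 : Finset (Finset (Sym2 (Fin 4))) :=
  { {s(0,1),s(1,2),s(2,0)}, {s(0,1),s(1,3),s(3,0)}, {s(0,2),s(2,3),s(3,0)}, {s(1,2),s(2,3),s(3,1)} }

def F4 : Finset (Finset (Sym2 (Fin 4))) :=
  { {s(0,1),s(1,2),s(2,3),s(3,0)}, {s(0,1),s(1,3),s(3,2),s(2,0)}, {s(0,2),s(2,1),s(1,3),s(3,0)} }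

lemma tri_mem : ∀ v a b : Fin 4, a ≠ b → v ≠ b → v ≠ a →
    ({s(v,a),s(a,b),s(b,v)} : Finset (Sym2 (Fin 4))) ∈ F3 := by decide

lemma quad_mem : ∀ v a b c : Fin 4, a ≠ b → a ≠ c → a ≠ v → b ≠ c → b ≠ v → c ≠ v →
    ({s(v,a),s(a,b),s(b,c),s(c,v)} : Finset (Sym2 (Fin 4))) ∈ F4 := by decide

open SimpleGraph in
def w3 (a b c : Fin 4) (h1 : a ≠ b) (h2 : b ≠ c) (h3 : c ≠ a) :
    (⊤ : SimpleGraph (Fin 4)).Walk a a :=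
  Walk.cons ((top_adj ..).mpr h1) (Walk.cons ((top_adj ..).mpr h2)
    (Walk.cons ((top_adj ..).mpr h3) Walk.nil))

open SimpleGraph in
lemma w3_isCycle (a b c : Fin 4) (h1 : a ≠ b) (h2 : b ≠ c) (h3 : c ≠ a) :
    (w3 a b c h1 h2 h3).IsCycle := by
  have h13 : a ≠ c := fun e => h3 e.symm
  rw [Walk.isCycle_def, Walk.isTrail_def]
  refine ⟨?_, by simp [w3], ?_⟩
  · simp [w3, Sym2.eq_iff]
    tauto
  · simp [w3]
    tauto

lemma w3_length (a b c : Fin 4) (h1 : a ≠ b) (h2 : b ≠ c) (h3 : c ≠ a) :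
    (w3 a b c h1 h2 h3).length = 3 := rfl

lemma w3_edges (a b c : Fin 4) (h1 : a ≠ b) (h2 : b ≠ c) (h3 : c ≠ a) :
    (w3 a b c h1 h2 h3).edges.toFinset = {s(a,b),s(b,c),s(c,a)} := by
  simp [w3]

open SimpleGraph in
def w4 (a b c d : Fin 4) (h1 : a ≠ b) (h2 : b ≠ c) (h3 : c ≠ d) (h4 : d ≠ a) :
    (⊤ : SimpleGraph (Fin 4)).Walk a a :=
  Walk.cons ((top_adj ..).mpr h1) (Walk.cons ((top_adj ..).mpr h2)
    (Walk.cons ((top_adj ..).mpr h3) (Walk.cons ((top_adj ..).mpr h4) Walk.nil)))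

open SimpleGraph in
lemma w4_isCycle (a b c d : Fin 4) (h1 : a ≠ b) (h2 : b ≠ c) (h3 : c ≠ d) (h4 : d ≠ a)
    (h5 : a ≠ c) (h6 : b ≠ d) :
    (w4 a b c d h1 h2 h3 h4).IsCycle := by
  have h4' : a ≠ d := fun e => h4 e.symm
  rw [Walk.isCycle_def, Walk.isTrail_def]
  refine ⟨?_, by simp [w4], ?_⟩
  · simp [w4, Sym2.eq_iff]
    tauto
  · simp [w4]
    tauto

lemma w4_length (a b c d : Fin 4) (h1 : a ≠ b) (h2 : b ≠ c) (h3 : c ≠ d) (h4 : d ≠ a) :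
    (w4 a b c d h1 h2 h3 h4).length = 4 := rfl

lemma w4_edges (a b c d : Fin 4) (h1 : a ≠ b) (h2 : b ≠ c) (h3 : c ≠ d) (h4 : d ≠ a) :
    (w4 a b c d h1 h2 h3 h4).edges.toFinset = {s(a,b),s(b,c),s(c,d),s(d,a)} := by
  simp [w4]

lemma cycleSets_top3 : cycleSets (⊤ : SimpleGraph (Fin 4)) 3 = ↑F3 := by
  ext C
  constructor
  · rintro ⟨v, w, hc, hl, rfl⟩
    cases w with
    | nil => simp at hl
    | cons h1 p =>
      cases p with
      | nil => simp at hl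
      | cons h2 q =>
        cases q with
        | nil => simp at hl
        | cons h3 r =>
          cases r with
          | cons h4 s => simp [SimpleGraph.Walk.length_cons] at hl
          | nil =>
            have hnd := hc.support_nodup
            simp [SimpleGraph.Walk.support_cons] at hnd
            simp [SimpleGraph.Walk.edges_cons]
            exact tri_mem _ _ _ hnd.1.1 (fun e => hnd.2 e.symm) h1.ne
  · intro hC
    simp only [Finset.coe_insert, Set.mem_insert_iff, Finset.coe_singleton,
      Set.mem_singleton_iff, F3, Finset.mem_insert, Finset.mem_singleton] at hC
    rcases hC with rfl | rfl | rfl | rfl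
    · exact ⟨0, w3 0 1 2 (by decide) (by decide) (by decide),
        w3_isCycle _ _ _ _ _ _, w3_length _ _ _ _ _ _, w3_edges _ _ _ _ _ _⟩
    · exact ⟨0, w3 0 1 3 (by decide) (by decide) (by decide),
        w3_isCycle _ _ _ _ _ _, w3_length _ _ _ _ _ _, w3_edges _ _ _ _ _ _⟩
    · exact ⟨0, w3 0 2 3 (by decide) (by decide) (by decide),
        w3_isCycle _ _ _ _ _ _, w3_length _ _ _ _ _ _, w3_edges _ _ _ _ _ _⟩
    · exact ⟨1, w3 1 2 3 (by decide) (by decide) (by decide),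
        w3_isCycle _ _ _ _ _ _, w3_length _ _ _ _ _ _, w3_edges _ _ _ _ _ _⟩

lemma cycleSets_top4 : cycleSets (⊤ : SimpleGraph (Fin 4)) 4 = ↑F4 := by
  ext C
  constructor
  · rintro ⟨v, w, hc, hl, rfl⟩
    cases w with
    | nil => simp at hl
    | cons h1 p =>
      cases p with
      | nil => simp at hl
      | cons h2 q =>
        cases q with
        | nil => simp at hl
        | cons h3 r =>
          cases r with
          | nil => simp [SimpleGraph.Walk.length_cons] at hl
          | cons h4 s =>
            cases s with
            | cons h5 t => simp [SimpleGraph.Walk.length_cons] at hl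
            | nil =>
              have hnd := hc.support_nodup
              simp [SimpleGraph.Walk.support_cons] at hnd
              simp [SimpleGraph.Walk.edges_cons]
              exact quad_mem _ _ _ _ hnd.1.1 hnd.1.2.1 hnd.1.2.2 hnd.2.1.1 hnd.2.1.2 hnd.2.2
  · intro hC
    simp only [Finset.coe_insert, Set.mem_insert_iff, Finset.coe_singleton,
      Set.mem_singleton_iff, F4, Finset.mem_insert, Finset.mem_singleton] at hC
    rcases hC with rfl | rfl | rfl
    · exact ⟨0, w4 0 1 2 3 (by decide) (by decide) (by decide) (by decide),
        w4_isCycle _ _ _ _ _ _ _ _ (by decide) (by decide),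
        w4_length _ _ _ _ _ _ _ _, w4_edges _ _ _ _ _ _ _ _⟩
    · exact ⟨0, w4 0 1 3 2 (by decide) (by decide) (by decide) (by decide),
        w4_isCycle _ _ _ _ _ _ _ _ (by decide) (by decide),
        w4_length _ _ _ _ _ _ _ _, w4_edges _ _ _ _ _ _ _ _⟩
    · exact ⟨0, w4 0 2 1 3 (by decide) (by decide) (by decide) (by decide),
        w4_isCycle _ _ _ _ _ _ _ _ (by decide) (by decide),
        w4_length _ _ _ _ _ _ _ _, w4_edges _ _ _ _ _ _ _ _⟩

lemma ncc3 (N : Finset (Sym2 (Fin 4))) :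
    negCycleCount (⊤ : SimpleGraph (Fin 4)) N 3
      = (F3.filter fun C => Odd (C ∩ N).card).card := by
  rw [negCycleCount, show {C | C ∈ cycleSets (⊤ : SimpleGraph (Fin 4)) 3 ∧ Odd (C ∩ N).card}
      = ↑(F3.filter fun C => Odd (C ∩ N).card) by
    ext C; simp [cycleSets_top3], Set.ncard_coe_finset]

lemma ncc4 (N : Finset (Sym2 (Fin 4))) :
    negCycleCount (⊤ : SimpleGraph (Fin 4)) N 4
      = (F4.filter fun C => Odd (C ∩ N).card).card := by
  rw [negCycleCount, show {C | C ∈ cycleSets (⊤ : SimpleGraph (Fin 4)) 4 ∧ Odd (C ∩ N).card}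
      = ↑(F4.filter fun C => Odd (C ∩ N).card) by
    ext C; simp [cycleSets_top4], Set.ncard_coe_finset]

lemma card3 {α : Type*} [DecidableEq α] (e1 e2 e3 : α) (h12 : e1 ≠ e2) (h13 : e1 ≠ e3)
    (h23 : e2 ≠ e3) (N : Finset α) :
    (({e1,e2,e3} : Finset α) ∩ N).card
      = (if e1 ∈ N then 1 else 0) + ((if e2 ∈ N then 1 else 0) + (if e3 ∈ N then 1 else 0)) := by
  rw [show ({e1,e2,e3} : Finset α) ∩ N = ({e1,e2,e3} : Finset α).filter (· ∈ N) by
      ext x; simp [and_comm]]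
  rw [Finset.card_filter, Finset.sum_insert (by simp [h12, h13]),
    Finset.sum_insert (by simp [h23]), Finset.sum_singleton]

lemma card4 {α : Type*} [DecidableEq α] (e1 e2 e3 e4 : α) (h12 : e1 ≠ e2) (h13 : e1 ≠ e3)
    (h14 : e1 ≠ e4) (h23 : e2 ≠ e3) (h24 : e2 ≠ e4) (h34 : e3 ≠ e4) (N : Finset α) :
    (({e1,e2,e3,e4} : Finset α) ∩ N).card
      = (if e1 ∈ N then 1 else 0) + ((if e2 ∈ N then 1 else 0)
        + ((if e3 ∈ N then 1 else 0) + (if e4 ∈ N then 1 else 0))) := by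
  rw [show ({e1,e2,e3,e4} : Finset α) ∩ N = ({e1,e2,e3,e4} : Finset α).filter (· ∈ N) by
      ext x; simp [and_comm]]
  rw [Finset.card_filter, Finset.sum_insert (by simp [h12, h13, h14]),
    Finset.sum_insert (by simp [h23, h24]), Finset.sum_insert (by simp [h34]),
    Finset.sum_singleton]

lemma counts_mem (N : Finset (Sym2 (Fin 4))) :
    (negCycleCount (⊤ : SimpleGraph (Fin 4)) N 3 = 0
        ∧ negCycleCount (⊤ : SimpleGraph (Fin 4)) N 4 = 0)
    ∨ (negCycleCount (⊤ : SimpleGraph (Fin 4)) N 3 = 2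
        ∧ negCycleCount (⊤ : SimpleGraph (Fin 4)) N 4 = 2)
    ∨ (negCycleCount (⊤ : SimpleGraph (Fin 4)) N 3 = 4
        ∧ negCycleCount (⊤ : SimpleGraph (Fin 4)) N 4 = 0) := by
  rw [ncc3, ncc4, Finset.card_filter, Finset.card_filter]
  unfold F3 F4
  rw [Finset.sum_insert (by decide), Finset.sum_insert (by decide),
    Finset.sum_insert (by decide), Finset.sum_singleton,
    Finset.sum_insert (by decide), Finset.sum_insert (by decide), Finset.sum_singleton]
  rw [card3 _ _ _ (by decide) (by decide) (by decide) N,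
    card3 _ _ _ (by decide) (by decide) (by decide) N,
    card3 _ _ _ (by decide) (by decide) (by decide) N,
    card3 _ _ _ (by decide) (by decide) (by decide) N,
    card4 _ _ _ _ (by decide) (by decide) (by decide) (by decide) (by decide) (by decide) N,
    card4 _ _ _ _ (by decide) (by decide) (by decide) (by decide) (by decide) (by decide) N,
    card4 _ _ _ _ (by decide) (by decide) (by decide) (by decide) (by decide) (by decide) N]
  rw [show s((2:Fin 4),0) = s(0,2) from Sym2.eq_swap,
    show s((3:Fin 4),0) = s(0,3) from Sym2.eq_swap,
    show s((3:Fin 4),1) = s(1,3) from Sym2.eq_swap,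
    show s((3:Fin 4),2) = s(2,3) from Sym2.eq_swap,
    show s((2:Fin 4),1) = s(1,2) from Sym2.eq_swap]
  by_cases h1 : s(0,1) ∈ N <;> by_cases h2 : s(0,2) ∈ N <;> by_cases h3 : s(0,3) ∈ N <;>
    by_cases h4 : s(1,2) ∈ N <;> by_cases h5 : s(1,3) ∈ N <;> by_cases h6 : s(2,3) ∈ N <;>
    simp only [h1, h2, h3, h4, h5, h6, if_true, if_false, ite_true, ite_false] <;>
    decide


/-- The negative cycle vectors `(c_3^-, c_4^-)` of all signings of `K_4`
are exactly `(0,0)`, `(2,2)`, and `(4,0)`. -/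
theorem stmt12 :
    {v : ℝ × ℝ | ∃ N : Finset (Sym2 (Fin 4)),
        v = ((negCycleCount (⊤ : SimpleGraph (Fin 4)) N 3 : ℝ),
             (negCycleCount (⊤ : SimpleGraph (Fin 4)) N 4 : ℝ))}
      = {(0, 0), (2, 2), (4, 0)} := by
  ext ⟨x, y⟩
  simp only [Set.mem_setOf_eq, Set.mem_insert_iff, Set.mem_singleton_iff, Prod.mk.injEq,
    Prod.ext_iff]
  constructor
  · rintro ⟨N, hN⟩
    obtain ⟨hx, hy⟩ := hN
    rcases counts_mem N with ⟨h3, h4⟩ | ⟨h3, h4⟩ | ⟨h3, h4⟩ <;>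
      [left; (right; left); (right; right)] <;>
      simp [hx, hy, h3, h4]
  · have e0 : negCycleCount (⊤ : SimpleGraph (Fin 4)) ∅ 3 = 0 := by rw [ncc3]; decide
    have e0' : negCycleCount (⊤ : SimpleGraph (Fin 4)) ∅ 4 = 0 := by rw [ncc4]; decide
    have e1 : negCycleCount (⊤ : SimpleGraph (Fin 4)) {s(0,1)} 3 = 2 := by rw [ncc3]; decide
    have e1' : negCycleCount (⊤ : SimpleGraph (Fin 4)) {s(0,1)} 4 = 2 := by rw [ncc4]; decide
    have e2 : negCycleCount (⊤ : SimpleGraph (Fin 4)) {s(0,1),s(2,3)} 3 = 4 := by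
      rw [ncc3]; decide
    have e2' : negCycleCount (⊤ : SimpleGraph (Fin 4)) {s(0,1),s(2,3)} 4 = 0 := by
      rw [ncc4]; decide
    rintro (⟨rfl, rfl⟩ | ⟨rfl, rfl⟩ | ⟨rfl, rfl⟩)
    · exact ⟨∅, by simp [e0, e0']⟩
    · exact ⟨{s(0,1)}, by simp [e1, e1']⟩
    · exact ⟨{s(0,1),s(2,3)}, by simp [e2, e2']⟩
end

section
/- Any edge set S of a graph Γ on which Aut(Γ) acts as the full symmetric group S_{|S|}, with |S| ≥ 3, is one of: a matching, a subset of edges all incident to a common vertex, or the three edges of a triangle. -/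
open Finset

private lemma edge_rep {V : Type*} (G : SimpleGraph V) {z : Sym2 V} (h : z ∈ G.edgeSet) :
    ∃ a b, G.Adj a b ∧ z = s(a, b) := by
  induction z using Sym2.ind with
  | _ a b => exact ⟨a, b, h, rfl⟩

/-- Any edge set `S` with `|S| ≥ 3` on which `Aut(Γ)` acts as the full
symmetric group is a matching, a set of edges all incident to one vertex, or the three
edges of a triangle. -/
theorem stmt15 {V : Type*} [Fintype V] [DecidableEq V] (G : SimpleGraph V)
    (S : Finset (Sym2 V)) (hSe : ∀ e ∈ S, e ∈ G.edgeSet) (h3 : 3 ≤ S.card)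
    (hperm : ∀ π : Equiv.Perm {e // e ∈ S}, ∃ φ : G ≃g G,
      ∀ e : {e // e ∈ S}, Sym2.map φ e.val = (π e).val) :
    IsMatchingSet S ∨ (∃ v : V, ∀ e ∈ S, v ∈ e) ∨
      (∃ a b c : V, G.Adj a b ∧ G.Adj b c ∧ G.Adj a c ∧
        S = {s(a, b), s(b, c), s(a, c)}) := by
  classical
  -- transfer of intersection between pairs
  have key : ∀ e ∈ S, ∀ f ∈ S, ∀ g ∈ S, ∀ h ∈ S, e ≠ f → g ≠ h →
      (∃ v : V, v ∈ e ∧ v ∈ f) → (∃ v : V, v ∈ g ∧ v ∈ h) := by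
    intro e he f hf g hg h hh hef hgh ⟨v, hve, hvf⟩
    set e' : {x // x ∈ S} := ⟨e, he⟩ with he'
    set f' : {x // x ∈ S} := ⟨f, hf⟩ with hf'
    set g' : {x // x ∈ S} := ⟨g, hg⟩ with hg'
    set h' : {x // x ∈ S} := ⟨h, hh⟩ with hh'
    have hef' : e' ≠ f' := fun hc => hef (congrArg Subtype.val hc)
    have hgh' : g' ≠ h' := fun hc => hgh (congrArg Subtype.val hc)
    set π : Equiv.Perm {x // x ∈ S} :=
      (Equiv.swap e' g').trans (Equiv.swap (Equiv.swap e' g' f') h') with hπ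
    have hA : g' ≠ Equiv.swap e' g' f' := by
      intro hc
      apply hef'
      have := (Equiv.swap e' g').injective
        ((Equiv.swap_apply_left e' g').trans hc)
      exact this
    have hπe : π e' = g' := by
      rw [hπ, Equiv.trans_apply, Equiv.swap_apply_left,
        Equiv.swap_apply_of_ne_of_ne hA hgh']
    have hπf : π f' = h' := by
      rw [hπ, Equiv.trans_apply, Equiv.swap_apply_left]
    obtain ⟨φ, hφ⟩ := hperm π
    have h1 : Sym2.map φ e = g := by
      have := hφ e'; rw [hπe] at this; exact this
    have h2 : Sym2.map φ f = h := by
      have := hφ f'; rw [hπf] at this; exact this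
    refine ⟨φ v, ?_, ?_⟩
    · rw [← h1]; exact Sym2.mem_map.mpr ⟨v, hve, rfl⟩
    · rw [← h2]; exact Sym2.mem_map.mpr ⟨v, hvf, rfl⟩
  by_cases hmat : IsMatchingSet S
  · exact Or.inl hmat
  right
  unfold IsMatchingSet at hmat
  push_neg at hmat
  obtain ⟨e, he, f, hf, hef, v, hv1, hv2⟩ := hmat
  have meets : ∀ g ∈ S, ∀ h ∈ S, g ≠ h → ∃ w, w ∈ g ∧ w ∈ h :=
    fun g hg h hh hgh => key e he f hf g hg h hh hef hgh ⟨v, hv1, hv2⟩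
  by_cases hstar : ∃ v : V, ∀ e ∈ S, v ∈ e
  · exact Or.inl hstar
  right
  push_neg at hstar
  obtain ⟨e1, he1S⟩ : S.Nonempty := Finset.card_pos.mp (by omega)
  obtain ⟨a, b, hab, rfl⟩ := edge_rep G (hSe e1 he1S)
  have hab' : a ≠ b := hab.ne
  obtain ⟨e2, he2S, ha2⟩ := hstar a
  have hne12 : s(a, b) ≠ e2 := fun hc => ha2 (hc ▸ Sym2.mem_mk_left a b)
  have hb2 : b ∈ e2 := by
    obtain ⟨w, hw1, hw2⟩ := meets _ he1S e2 he2S hne12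
    rcases Sym2.mem_iff.mp hw1 with rfl | rfl
    · exact absurd hw2 ha2
    · exact hw2
  set c := Sym2.Mem.other hb2 with hcdef
  have hc : s(b, c) = e2 := Sym2.other_spec hb2
  have hcb : c ≠ b := Sym2.other_ne (G.not_isDiag_of_mem_edgeSet (hSe e2 he2S)) hb2
  have hca : c ≠ a := by
    intro hcc
    exact ha2 (by rw [← hc, ← hcc]; exact Sym2.mem_mk_right b c)
  obtain ⟨e3, he3S, hb3⟩ := hstar b
  have hne13 : s(a, b) ≠ e3 := fun hcc => hb3 (hcc ▸ Sym2.mem_mk_right a b)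
  have hne23 : e2 ≠ e3 := fun hcc => hb3 (hcc ▸ hb2)
  have ha3 : a ∈ e3 := by
    obtain ⟨w, hw1, hw2⟩ := meets _ he1S e3 he3S hne13
    rcases Sym2.mem_iff.mp hw1 with rfl | rfl
    · exact hw2
    · exact absurd hw2 hb3
  have hc3 : c ∈ e3 := by
    obtain ⟨w, hw1, hw2⟩ := meets e2 he2S e3 he3S hne23
    rw [← hc] at hw1
    rcases Sym2.mem_iff.mp hw1 with rfl | rfl
    · exact absurd hw2 hb3
    · exact hw2
  have he3 : e3 = s(a, c) := (Sym2.mem_and_mem_iff hca.symm).mp ⟨ha3, hc3⟩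
  have hbc : G.Adj b c := by rw [← SimpleGraph.mem_edgeSet, hc]; exact hSe e2 he2S
  have hac : G.Adj a c := by rw [← SimpleGraph.mem_edgeSet, ← he3]; exact hSe e3 he3S
  refine ⟨a, b, c, hab, hbc, hac, ?_⟩
  -- any further edge of S would break pairwise intersection
  have key2 : ∀ x y, s(x, y) ∈ S → s(x, y) ≠ s(a, b) → s(x, y) ≠ e2 → s(x, y) ≠ e3 →
      x = a ∨ x = b ∨ x = c := by
    intro x y hfS h1 h2 h3'
    by_contra hx
    push_neg at hx
    obtain ⟨hxa, hxb, hxc⟩ := hx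
    have hy1 : y = a ∨ y = b := by
      obtain ⟨w, hw1, hw2⟩ := meets _ hfS _ he1S h1
      rcases Sym2.mem_iff.mp hw1 with rfl | rfl
      · rcases Sym2.mem_iff.mp hw2 with rfl | rfl
        · exact absurd rfl hxa
        · exact absurd rfl hxb
      · exact Sym2.mem_iff.mp hw2
    have hy2 : y = b ∨ y = c := by
      obtain ⟨w, hw1, hw2⟩ := meets _ hfS _ he2S h2
      rw [← hc] at hw2
      rcases Sym2.mem_iff.mp hw1 with rfl | rfl
      · rcases Sym2.mem_iff.mp hw2 with rfl | rfl
        · exact absurd rfl hxb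
        · exact absurd rfl hxc
      · exact Sym2.mem_iff.mp hw2
    have hy3 : y = a ∨ y = c := by
      obtain ⟨w, hw1, hw2⟩ := meets _ hfS _ he3S h3'
      rw [he3] at hw2
      rcases Sym2.mem_iff.mp hw1 with rfl | rfl
      · rcases Sym2.mem_iff.mp hw2 with rfl | rfl
        · exact absurd rfl hxa
        · exact absurd rfl hxc
      · exact Sym2.mem_iff.mp hw2
    rcases hy1 with rfl | rfl
    · rcases hy2 with h | h
      · exact hab' h
      · exact hca h.symm
    · rcases hy3 with h | h
      · exact hab' h.symm
      · exact hcb h.symm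
  have hsub : S ⊆ {s(a, b), s(b, c), s(a, c)} := by
    intro f hfS'
    obtain ⟨x, y, hxyadj, rfl⟩ := edge_rep G (hSe f hfS')
    by_cases hq1 : s(x, y) = s(a, b)
    · simp [hq1]
    by_cases hq2 : s(x, y) = e2
    · simp [hq2, ← hc]
    by_cases hq3 : s(x, y) = e3
    · simp [hq3, he3]
    have hx := key2 x y hfS' hq1 hq2 hq3
    have hy := key2 y x (by rwa [Sym2.eq_swap]) (by rwa [← Sym2.eq_swap])
      (by rwa [← Sym2.eq_swap]) (by rwa [← Sym2.eq_swap])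
    have hxy : x ≠ y := hxyadj.ne
    rcases hx with rfl | rfl | rfl <;> rcases hy with rfl | rfl | rfl <;>
      simp_all [Finset.mem_insert, Sym2.eq_swap]
  have hT : ({s(a, b), s(b, c), s(a, c)} : Finset (Sym2 V)).card ≤ 3 := by
    refine le_trans (Finset.card_insert_le _ _) ?_
    have := Finset.card_insert_le s(b, c) ({s(a, c)} : Finset (Sym2 V))
    simp at this ⊢
    omega
  exact Finset.eq_of_subset_of_card_le hsub (le_trans hT h3)
end

section
/- In the Petersen graph, for the permutable 3-matching M_3 consisting of three alternate edges of a 6-cycle: the maximum, over all cycles C_l of length l, of |E(C_l) ∩ M_3| equals 2 for l = 5, 3 for l = 6, 2 for l = 8, and 3 for l = 9. -/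
open Finset

/-- The Petersen graph: outer 5-cycle on `(i, false)`, inner pentagram on `(i, true)`,
and spokes `(i, false) — (i, true)`. -/
def petersen : SimpleGraph (ZMod 5 × Bool) :=
  SimpleGraph.fromRel fun p q =>
    (p.2 = false ∧ q.2 = false ∧ q.1 = p.1 + 1) ∨
    (p.2 = true ∧ q.2 = true ∧ q.1 = p.1 + 2) ∨
    (p.1 = q.1 ∧ p.2 = false ∧ q.2 = true)

/-- A permutable 3-matching in the Petersen graph: the three alternate edges
`O₀O₁`, `I₁I₃`, `O₃O₄` of the 6-cycle `O₀ O₁ I₁ I₃ O₃ O₄`. -/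
def petersenM3 : Finset (Sym2 (ZMod 5 × Bool)) :=
  {s(((0 : ZMod 5), false), ((1 : ZMod 5), false)),
   s(((1 : ZMod 5), true), ((3 : ZMod 5), true)),
   s(((3 : ZMod 5), false), ((4 : ZMod 5), false))}

abbrev PV := ZMod 5 × Bool

instance petersenAdjDec : DecidableRel petersen.Adj := fun a b =>
  decidable_of_iff _ (SimpleGraph.fromRel_adj _ a b).symm

def pnbrs : PV → List PV := fun p =>
  if p.2 then [(p.1 + 2, true), (p.1 + 3, true), (p.1, false)]
  else [(p.1 + 1, false), (p.1 + 4, false), (p.1, true)]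

lemma mem_pnbrs : ∀ a b : PV, petersen.Adj a b → b ∈ pnbrs a := by decide

def wlists : ℕ → PV → List (List PV)
  | 0, v => [[v]]
  | n + 1, v => (pnbrs v).flatMap fun u => (wlists n u).map (List.cons v)

lemma support_mem_wlists : ∀ {v u : PV} (w : petersen.Walk v u),
    w.support ∈ wlists w.length v := by
  intro v u w
  induction w with
  | nil => simp [wlists]
  | cons h p ih =>
    simp only [SimpleGraph.Walk.support_cons, SimpleGraph.Walk.length_cons, wlists,
      List.mem_flatMap, List.mem_map]
    exact ⟨_, mem_pnbrs _ _ h, _, ih, rfl⟩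

def pairsOf (l : List PV) : List (PV × PV) := l.zip l.tail

lemma mem_pairs_of_mem_edges : ∀ {v u : PV} (w : petersen.Walk v u) (a b : PV),
    s(a, b) ∈ w.edges → (a, b) ∈ pairsOf w.support ∨ (b, a) ∈ pairsOf w.support := by
  intro v u w
  induction w with
  | nil => simp
  | @cons v c u h p ih =>
    intro a b hab
    have hsup : p.support = c :: p.support.tail := p.support_eq_cons
    have hpairs : pairsOf (SimpleGraph.Walk.cons h p).support
        = (v, c) :: pairsOf p.support := by
      simp only [SimpleGraph.Walk.support_cons, pairsOf]
      rw [hsup]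
      rfl
    rw [SimpleGraph.Walk.edges_cons, List.mem_cons] at hab
    rcases hab with hab | hab
    · rw [Sym2.eq_iff] at hab
      rcases hab with ⟨rfl, rfl⟩ | ⟨rfl, rfl⟩
      · left; rw [hpairs]; exact List.mem_cons_self
      · right; rw [hpairs]; exact List.mem_cons_self
    · rcases ih a b hab with h' | h'
      · left; rw [hpairs]; exact List.mem_cons_of_mem _ h'
      · right; rw [hpairs]; exact List.mem_cons_of_mem _ h'

def O0 : PV := ((0 : ZMod 5), false)
def O1 : PV := ((1 : ZMod 5), false)
def I1 : PV := ((1 : ZMod 5), true)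
def I3 : PV := ((3 : ZMod 5), true)
def O3 : PV := ((3 : ZMod 5), false)
def O4 : PV := ((4 : ZMod 5), false)

def hasPr (l : List PV) (a b : PV) : Bool :=
  decide ((a, b) ∈ pairsOf l) || decide ((b, a) ∈ pairsOf l)

def goodList (l : List PV) : Bool :=
  decide (l.getLast? = some O0) && decide l.tail.Nodup &&
    hasPr l O0 O1 && hasPr l I1 I3 && hasPr l O3 O4

set_option maxRecDepth 10000 in
lemma check5 : (wlists 5 O0).all (fun l => !goodList l) = true := by decide


set_option maxRecDepth 10000 in
set_option maxHeartbeats 4000000 in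
lemma check8aux : ((pnbrs O0).all fun u => (pnbrs u).all fun w =>
    (wlists 6 w).all fun l => !goodList (O0 :: u :: l)) = true := by decide

lemma check_wlists : ∀ n, n = 5 ∨ n = 8 → ∀ l ∈ wlists n O0, goodList l = false := by
  rintro n (rfl | rfl) l hl
  · have := List.all_eq_true.mp check5 l hl
    simpa using this
  · rw [show wlists 8 O0 = (pnbrs O0).flatMap
        (fun u => (wlists 7 u).map (List.cons O0)) from rfl] at hl
    simp only [List.mem_flatMap, List.mem_map] at hl
    obtain ⟨u, hu, l1, hl1, rfl⟩ := hl
    rw [show wlists 7 u = (pnbrs u).flatMap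
        (fun w => (wlists 6 w).map (List.cons u)) from rfl] at hl1
    simp only [List.mem_flatMap, List.mem_map] at hl1
    obtain ⟨w, hw, l2, hl2, rfl⟩ := hl1
    have h1 := List.all_eq_true.mp check8aux u hu
    have h2 := List.all_eq_true.mp (List.all_eq_true.mp h1 w hw) l2 hl2
    simpa using h2

lemma no_three (n : ℕ) (hn : n = 5 ∨ n = 8) :
    ∀ C ∈ cycleSets petersen n, ¬ petersenM3 ⊆ C := by
  rintro C ⟨v, w, hc, hlen, rfl⟩ hsub
  have hmem : ∀ a b : PV, s(a, b) ∈ petersenM3 → s(a, b) ∈ w.edges := by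
    intro a b h
    have := hsub h
    rwa [List.mem_toFinset] at this
  have he1 : s(O0, O1) ∈ w.edges := hmem _ _ (by decide)
  have hO0 : O0 ∈ w.support := w.fst_mem_support_of_mem_edges he1
  set w' := w.rotate O0 hO0 with hw'
  have hc' : w'.IsCycle := hc.rotate hO0
  have hrot := w.rotate_edges O0 hO0
  have hlen' : w'.length = n := by
    rw [← SimpleGraph.Walk.length_edges, hrot.perm.length_eq,
      SimpleGraph.Walk.length_edges, hlen]
  have hmem' : ∀ a b : PV, s(a, b) ∈ petersenM3 → s(a, b) ∈ w'.edges := by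
    intro a b h
    rw [hrot.mem_iff]
    exact hmem a b h
  have hsupmem : w'.support ∈ wlists n O0 := by
    have := support_mem_wlists w'
    rwa [hlen'] at this
  have hbad := check_wlists n hn w'.support hsupmem
  have hgood : goodList w'.support = true := by
    simp only [goodList, hasPr, Bool.and_eq_true, Bool.or_eq_true, decide_eq_true_eq]
    refine ⟨⟨⟨⟨?_, hc'.support_nodup⟩, ?_⟩, ?_⟩, ?_⟩
    · rw [List.getLast?_eq_getLast (by simp), w'.getLast_support]
    · exact mem_pairs_of_mem_edges w' _ _ (hmem' O0 O1 (by decide))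
    · exact mem_pairs_of_mem_edges w' _ _ (hmem' I1 I3 (by decide))
    · exact mem_pairs_of_mem_edges w' _ _ (hmem' O3 O4 (by decide))
  rw [hbad] at hgood
  exact Bool.false_ne_true hgood


def c5 : petersen.Walk O0 O0 :=
  .cons (show petersen.Adj O0 O1 by decide)
    (.cons (show petersen.Adj O1 ((2 : ZMod 5), false) by decide)
    (.cons (show petersen.Adj ((2 : ZMod 5), false) O3 by decide)
    (.cons (show petersen.Adj O3 O4 by decide)
    (.cons (show petersen.Adj O4 O0 by decide) .nil))))

lemma c5_cyc : c5.IsCycle := by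
  rw [SimpleGraph.Walk.isCycle_def, SimpleGraph.Walk.isTrail_def]
  exact ⟨by decide, by simp [c5], by decide⟩

def c6 : petersen.Walk O0 O0 :=
  .cons (show petersen.Adj O0 O1 by decide)
    (.cons (show petersen.Adj O1 I1 by decide)
    (.cons (show petersen.Adj I1 I3 by decide)
    (.cons (show petersen.Adj I3 O3 by decide)
    (.cons (show petersen.Adj O3 O4 by decide)
    (.cons (show petersen.Adj O4 O0 by decide) .nil)))))

lemma c6_cyc : c6.IsCycle := by
  rw [SimpleGraph.Walk.isCycle_def, SimpleGraph.Walk.isTrail_def]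
  exact ⟨by decide, by simp [c6], by decide⟩

def c8 : petersen.Walk O0 O0 :=
  .cons (show petersen.Adj O0 O1 by decide)
    (.cons (show petersen.Adj O1 ((2 : ZMod 5), false) by decide)
    (.cons (show petersen.Adj ((2 : ZMod 5), false) ((2 : ZMod 5), true) by decide)
    (.cons (show petersen.Adj ((2 : ZMod 5), true) ((0 : ZMod 5), true) by decide)
    (.cons (show petersen.Adj ((0 : ZMod 5), true) I3 by decide)
    (.cons (show petersen.Adj I3 O3 by decide)
    (.cons (show petersen.Adj O3 O4 by decide)
    (.cons (show petersen.Adj O4 O0 by decide) .nil)))))))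

lemma c8_cyc : c8.IsCycle := by
  rw [SimpleGraph.Walk.isCycle_def, SimpleGraph.Walk.isTrail_def]
  exact ⟨by decide, by simp [c8], by decide⟩

def c9 : petersen.Walk O0 O0 :=
  .cons (show petersen.Adj O0 O1 by decide)
    (.cons (show petersen.Adj O1 I1 by decide)
    (.cons (show petersen.Adj I1 I3 by decide)
    (.cons (show petersen.Adj I3 O3 by decide)
    (.cons (show petersen.Adj O3 O4 by decide)
    (.cons (show petersen.Adj O4 ((4 : ZMod 5), true) by decide)
    (.cons (show petersen.Adj ((4 : ZMod 5), true) ((2 : ZMod 5), true) by decide)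
    (.cons (show petersen.Adj ((2 : ZMod 5), true) ((0 : ZMod 5), true) by decide)
    (.cons (show petersen.Adj ((0 : ZMod 5), true) O0 by decide) .nil))))))))

lemma c9_cyc : c9.IsCycle := by
  rw [SimpleGraph.Walk.isCycle_def, SimpleGraph.Walk.isTrail_def]
  exact ⟨by decide, by simp [c9], by decide⟩

lemma card_M3 : petersenM3.card = 3 := by decide

lemma ub_le3 (C : Finset (Sym2 PV)) : (C ∩ petersenM3).card ≤ 3 :=
  le_trans (card_le_card inter_subset_right) card_M3.le

lemma ub_le2 (n : ℕ) (hn : n = 5 ∨ n = 8) (C : Finset (Sym2 PV))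
    (hC : C ∈ cycleSets petersen n) : (C ∩ petersenM3).card ≤ 2 := by
  by_contra h
  push_neg at h
  have h3 : (C ∩ petersenM3).card = 3 :=
    le_antisymm (ub_le3 C) h
  have heq : C ∩ petersenM3 = petersenM3 :=
    eq_of_subset_of_card_le inter_subset_right (by rw [h3, card_M3])
  exact no_three n hn C hC (heq ▸ inter_subset_left)


/-- For this permutable 3-matching of the Petersen graph, the maximum
number of matching edges on a cycle of length `l` is 2, 3, 2, 3 for `l = 5, 6, 8, 9`. -/
theorem stmt16 :
    IsGreatest {k | ∃ C ∈ cycleSets petersen 5, (C ∩ petersenM3).card = k} 2 ∧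
    IsGreatest {k | ∃ C ∈ cycleSets petersen 6, (C ∩ petersenM3).card = k} 3 ∧
    IsGreatest {k | ∃ C ∈ cycleSets petersen 8, (C ∩ petersenM3).card = k} 2 ∧
    IsGreatest {k | ∃ C ∈ cycleSets petersen 9, (C ∩ petersenM3).card = k} 3 := by
  refine ⟨⟨⟨c5.edges.toFinset, ⟨O0, c5, c5_cyc, by decide, rfl⟩, by decide⟩, ?_⟩,
    ⟨⟨c6.edges.toFinset, ⟨O0, c6, c6_cyc, by decide, rfl⟩, by decide⟩, ?_⟩,
    ⟨⟨c8.edges.toFinset, ⟨O0, c8, c8_cyc, by decide, rfl⟩, by decide⟩, ?_⟩,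
    ⟨⟨c9.edges.toFinset, ⟨O0, c9, c9_cyc, by decide, rfl⟩, by decide⟩, ?_⟩⟩
  · rintro k ⟨C, hC, rfl⟩
    exact ub_le2 5 (Or.inl rfl) C hC
  · rintro k ⟨C, hC, rfl⟩
    exact (rfl.le.trans (ub_le3 C) : _)
  · rintro k ⟨C, hC, rfl⟩
    exact ub_le2 8 (Or.inr rfl) C hC
  · rintro k ⟨C, hC, rfl⟩
    exact ub_le3 C
end
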